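/- Let n and r be natural numbers with 1 ≤ r ≤ n, and let h : Fin n → ℝ be defined by h_r = (1 / C(n-1, r-1)) · Σ_{α ⊆ {1,…,n}, |α| = r} H(X_α | X_{ᾱ}), where H is a conditional-entropy function satisfying submodularity and monotonicity (i.e., H is a polymatroid rank function on subsets of {1,…,n}, with H(X_α | X_{ᾱ}) := H(X_{{1,…,n}}) - H(X_{ᾱ})). Then h_1 ≤ h_2 ≤ ⋯ ≤ h_n. -/
import Mathlib

open Finset

private lemma key1 {n : ℕ} (f : Finset (Fin n) → ℝ)
    (hsub : ∀ A B : Finset (Fin n), f (A ∪ B) + f (A ∩ B) ≤ f A + f B) :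
    ∀ S B : Finset (Fin n),
      f (B ∪ S) + S.card * f B ≤ (∑ i ∈ S, f (insert i B)) + f B := by
  intro S
  induction S using Finset.induction_on with
  | empty => intro B; simp
  | @insert a S' ha ih =>
    intro B
    have hu : (B ∪ S') ∪ insert a B = B ∪ insert a S' := by
      ext x; simp; tauto
    have hi : (B ∪ S') ∩ insert a B = B := by
      ext x
      simp only [mem_inter, mem_union, mem_insert]
      constructor
      · rintro ⟨h1 | h1, h2 | h2⟩ <;> first | exact h2 | exact h1 | (subst h2; exact absurd h1 ha)
      · intro hx; exact ⟨Or.inl hx, Or.inr hx⟩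
    have h1 : f (B ∪ insert a S') + f B ≤ f (B ∪ S') + f (insert a B) := by
      have := hsub (B ∪ S') (insert a B)
      rw [hu, hi] at this
      exact this
    have h2 := ih B
    rw [Finset.sum_insert ha, Finset.card_insert_of_notMem ha]
    push_cast
    linarith

private lemma key2 {n : ℕ} (f : Finset (Fin n) → ℝ)
    (hsub : ∀ A B : Finset (Fin n), f (A ∪ B) + f (A ∩ B) ≤ f A + f B)
    (α : Finset (Fin n)) :
    ∑ i ∈ α, (f univ - f (insert i αᶜ)) ≤ ((α.card : ℝ) - 1) * (f univ - f αᶜ) := by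
  have h1 := key1 f hsub α αᶜ
  have hcu : αᶜ ∪ α = univ := by ext x; simp only [mem_union, mem_compl, mem_univ, iff_true]; tauto
  rw [hcu] at h1
  rw [Finset.sum_sub_distrib, Finset.sum_const, nsmul_eq_mul]
  nlinarith [h1]

private lemma key3 {n : ℕ} (c : Finset (Fin n) → ℝ) (r : ℕ) :
    ∑ α ∈ powersetCard (r + 1) (univ : Finset (Fin n)), ∑ i ∈ α, c (α.erase i)
      = ∑ β ∈ powersetCard r (univ : Finset (Fin n)), ((n - r : ℕ) : ℝ) * c β := by
  rw [show (∑ α ∈ powersetCard (r + 1) (univ : Finset (Fin n)), ∑ i ∈ α, c (α.erase i))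
      = ∑ p ∈ (powersetCard (r + 1) (univ : Finset (Fin n))).sigma (fun α => α),
          c (p.1.erase p.2) from
    (Finset.sum_sigma _ _ fun p : (_ : Finset (Fin n)) × Fin n => c (p.1.erase p.2)).symm]
  have : ∑ β ∈ powersetCard r (univ : Finset (Fin n)), ((n - r : ℕ) : ℝ) * c β
      = ∑ p ∈ (powersetCard r (univ : Finset (Fin n))).sigma (fun β => βᶜ), c p.1 := by
    rw [Finset.sum_sigma]
    refine Finset.sum_congr rfl fun β hβ => ?_
    calc ((n - r : ℕ) : ℝ) * c β = (βᶜ.card : ℝ) * c β := by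
          rw [Finset.card_compl, Fintype.card_fin, Finset.mem_powersetCard_univ.mp hβ]
      _ = ∑ _s ∈ βᶜ, c β := by rw [Finset.sum_const, nsmul_eq_mul]
      _ = ∑ s ∈ βᶜ, c (⟨β, s⟩ : (_ : Finset (Fin n)) × Fin n).fst := rfl
  rw [this]
  refine Finset.sum_nbij' (fun p => ⟨p.1.erase p.2, p.2⟩) (fun p => ⟨insert p.2 p.1, p.2⟩)
    ?_ ?_ ?_ ?_ ?_
  · rintro ⟨α, i⟩ hp
    simp only [Finset.mem_sigma, Finset.mem_powersetCard_univ] at hp ⊢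
    obtain ⟨hα, hi⟩ := hp
    refine ⟨?_, ?_⟩
    · rw [Finset.card_erase_of_mem hi, hα]; omega
    · simp [hi]
  · rintro ⟨β, i⟩ hp
    simp only [Finset.mem_sigma, Finset.mem_powersetCard_univ, Finset.mem_compl] at hp ⊢
    obtain ⟨hβ, hi⟩ := hp
    refine ⟨?_, Finset.mem_insert_self _ _⟩
    rw [Finset.card_insert_of_notMem hi, hβ]
  · rintro ⟨α, i⟩ hp
    simp only [Finset.mem_sigma] at hp
    simp [Finset.insert_erase hp.2]
  · rintro ⟨β, i⟩ hp
    simp only [Finset.mem_sigma, Finset.mem_compl] at hp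
    simp [Finset.erase_insert hp.2]
  · rintro ⟨α, i⟩ hp
    rfl

/-- Han-type inequality for polymatroid rank functions: with
`h r = (1/C(n-1,r-1)) ∑_{|α|=r} (f(univ) - f(αᶜ))` (the abstract version of
`H(X_α | X_ᾱ)` averaged over all subsets of size `r`), the sequence
`h 1 ≤ h 2 ≤ ⋯ ≤ h n` is nondecreasing. -/
theorem han_monotone {n : ℕ} (hn : 1 ≤ n) (f : Finset (Fin n) → ℝ)
    (h0 : f ∅ = 0)
    (hmono : ∀ A B : Finset (Fin n), A ⊆ B → f A ≤ f B)
    (hsub : ∀ A B : Finset (Fin n), f (A ∪ B) + f (A ∩ B) ≤ f A + f B)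
    (h : ℕ → ℝ)
    (hdef : ∀ r : ℕ, h r = (1 / (((n - 1).choose (r - 1) : ℕ) : ℝ)) *
      ∑ α ∈ powersetCard r (univ : Finset (Fin n)), (f univ - f αᶜ))
    (r₁ r₂ : ℕ) (h1 : 1 ≤ r₁) (h12 : r₁ ≤ r₂) (h2 : r₂ ≤ n) :
    h r₁ ≤ h r₂ := by
  -- single-step lemma
  have step : ∀ r : ℕ, 1 ≤ r → r + 1 ≤ n → h r ≤ h (r + 1) := by
    intro r hr1 hrn
    set g : ℕ → ℝ := fun k => ∑ α ∈ powersetCard k (univ : Finset (Fin n)), (f univ - f αᶜ)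
      with hg
    have hkey : ((n - r : ℕ) : ℝ) * g r ≤ (r : ℝ) * g (r + 1) := by
      have h3 := key3 (fun β => f univ - f βᶜ) r
      have h4 : ∑ α ∈ powersetCard (r + 1) (univ : Finset (Fin n)),
          ∑ i ∈ α, (f univ - f ((α.erase i)ᶜ))
          ≤ (r : ℝ) * ∑ α ∈ powersetCard (r + 1) (univ : Finset (Fin n)),
            (f univ - f αᶜ) := by
        rw [Finset.mul_sum]
        refine Finset.sum_le_sum fun α hα => ?_
        have hcard : α.card = r + 1 := Finset.mem_powersetCard_univ.mp hα
        have := key2 f hsub α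
        have heq : ∀ i ∈ α, f ((α.erase i)ᶜ) = f (insert i αᶜ) := by
          intro i hi
          rw [Finset.compl_erase]
        calc ∑ i ∈ α, (f univ - f ((α.erase i)ᶜ))
            = ∑ i ∈ α, (f univ - f (insert i αᶜ)) := by
              refine Finset.sum_congr rfl fun i hi => by rw [heq i hi]
          _ ≤ ((α.card : ℝ) - 1) * (f univ - f αᶜ) := this
          _ = (r : ℝ) * (f univ - f αᶜ) := by rw [hcard]; push_cast; ring
      rw [h3] at h4
      rw [← Finset.mul_sum] at h4
      exact h4
    have hchoose : (r : ℝ) * ((n - 1).choose r : ℝ)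
        = ((n - r : ℕ) : ℝ) * ((n - 1).choose (r - 1) : ℝ) := by
      have := Nat.choose_succ_right_eq (n - 1) (r - 1)
      rw [Nat.sub_add_cancel hr1] at this
      have hnr : n - 1 - (r - 1) = n - r := by omega
      rw [hnr] at this
      have h5 : r * (n - 1).choose r = (n - r) * (n - 1).choose (r - 1) := by
        rw [Nat.mul_comm, this, Nat.mul_comm]
      exact_mod_cast h5
    have hc1 : (0 : ℝ) < ((n - 1).choose (r - 1) : ℝ) := by
      exact_mod_cast Nat.choose_pos (by omega)
    have hc2 : (0 : ℝ) < ((n - 1).choose r : ℝ) := by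
      exact_mod_cast Nat.choose_pos (by omega : r ≤ n - 1)
    rw [hdef r, hdef (r + 1)]
    have hr' : (r + 1) - 1 = r := by omega
    rw [hr']
    rw [div_mul_eq_mul_div, div_mul_eq_mul_div, div_le_div_iff₀ hc1 hc2, one_mul, one_mul]
    have hrpos : (0 : ℝ) < (r : ℝ) := by exact_mod_cast hr1
    refine le_of_mul_le_mul_left ?_ hrpos
    calc (r : ℝ) * ((∑ α ∈ powersetCard r (univ : Finset (Fin n)), (f univ - f αᶜ)) *
            ((n - 1).choose r : ℝ))
        = (∑ α ∈ powersetCard r (univ : Finset (Fin n)), (f univ - f αᶜ)) *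
            ((r : ℝ) * ((n - 1).choose r : ℝ)) := by ring
      _ = (∑ α ∈ powersetCard r (univ : Finset (Fin n)), (f univ - f αᶜ)) *
            (((n - r : ℕ) : ℝ) * ((n - 1).choose (r - 1) : ℝ)) := by rw [hchoose]
      _ = (((n - r : ℕ) : ℝ) * g r) * ((n - 1).choose (r - 1) : ℝ) := by rw [hg]; ring
      _ ≤ ((r : ℝ) * g (r + 1)) * ((n - 1).choose (r - 1) : ℝ) :=
          mul_le_mul_of_nonneg_right hkey hc1.le
      _ = (r : ℝ) * ((∑ α ∈ powersetCard (r + 1) (univ : Finset (Fin n)), (f univ - f αᶜ)) *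
            ((n - 1).choose (r - 1) : ℝ)) := by rw [hg]; ring
  revert h2
  induction r₂, h12 using Nat.le_induction with
  | base => intro _; exact le_rfl
  | succ k hk ih =>
    intro h2
    exact le_trans (ih (by omega)) (step k (le_trans h1 hk) h2)
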